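/- Let Y be the output of a deterministic function f applied to a finite random variable X, i.e., Y = f(X). Then for every y ∈ supp(P_Y), the pointwise maximal leakage equals ℓ(X→y) = −log P_Y(y). -/
import Mathlib


/-- If Y = f(X) is deterministic, then ℓ(X→y) = −log P_Y(y) for all y ∈ supp(P_Y). -/
theorem stmt_3 {α β : Type*} [Fintype α] [Fintype β] [DecidableEq β]
    (pX : α → ℝ)
    (hpX : ∀ x, 0 ≤ pX x)
    (hsum : ∑ x, pX x = 1)
    (f : α → β)
    (pY : β → ℝ) (hpY : ∀ y, pY y = ∑ x, if f x = y then pX x else 0)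
    (sX : Finset α) (hsX : ∀ x, x ∈ sX ↔ 0 < pX x) (hneX : sX.Nonempty)
    (y : β) (hy : 0 < pY y) :
    Real.log (sX.sup' hneX fun x =>
        ((if f x = y then pX x else 0) / pY y) / pX x) = - Real.log (pY y) := by
  have hex : ∃ x, 0 < (if f x = y then pX x else 0) := by
    by_contra h
    push_neg at h
    have : pY y ≤ 0 := by
      rw [hpY]
      exact Finset.sum_nonpos fun x _ => h x
    linarith
  obtain ⟨x₀, hx₀⟩ := hex
  have hfx₀ : f x₀ = y := by by_contra h; simp [h] at hx₀
  have hpx₀ : 0 < pX x₀ := by simpa [hfx₀] using hx₀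
  have hx₀s : x₀ ∈ sX := (hsX x₀).2 hpx₀
  have hsup : (sX.sup' hneX fun x =>
      ((if f x = y then pX x else 0) / pY y) / pX x) = 1 / pY y := by
    apply le_antisymm
    · apply Finset.sup'_le
      intro x hx
      have hpx : 0 < pX x := (hsX x).1 hx
      by_cases h : f x = y
      · simp only [h, if_pos]
        rw [div_div, mul_comm, ← div_div, div_self hpx.ne']
      · simp only [h, if_neg, not_false_iff, zero_div]
        positivity
    · refine Finset.le_sup'_of_le _ hx₀s ?_
      simp only [hfx₀, if_pos]
      rw [div_div, mul_comm, ← div_div, div_self hpx₀.ne']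
  rw [hsup, one_div, Real.log_inv]
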